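/- If T is a P_4-induced-saturated trigraph on at least 2 vertices, then T contains no four vertices a, b, c, d such that ab, bc, cd are all gray edges. Equivalently, every connected component of the graph formed by the gray edges of T that has at least 2 vertices is either a triangle (all three edges gray) or a star. -/

import Mathlib

open SimpleGraph

/-- A trigraph: the pairs of distinct vertices are partitioned into black edges,
gray edges, and (implicitly) white edges. -/
structure Trigraph (V : Type*) where
  /-- the graph of black edges -/
  black : SimpleGraph V
  /-- the graph of gray edges -/
  gray : SimpleGraph V
  /-- no pair is simultaneously black and gray -/
  disjoint : ∀ u v : V, ¬ (black.Adj u v ∧ gray.Adj u v)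

namespace Trigraph

variable {V : Type*} {W : Type*}

/-- `u v` is a white edge of `T`: the vertices are distinct and joined by neither a
black edge nor a gray edge. -/
def White (T : Trigraph V) (u v : V) : Prop :=
  u ≠ v ∧ ¬ T.black.Adj u v ∧ ¬ T.gray.Adj u v

/-- A realization of a trigraph is a graph containing every black edge and contained
in the union of the black and gray edges. -/
def IsRealization (T : Trigraph V) (R : SimpleGraph V) : Prop :=
  T.black ≤ R ∧ R ≤ T.black ⊔ T.gray

/-- The graph with the single edge `uv` (empty if `u = v`). -/
def single (u v : V) : SimpleGraph V := SimpleGraph.fromEdgeSet {s(u, v)}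

/-- The trigraph obtained from `T` by recoloring the pair `uv` gray. -/
def flip (T : Trigraph V) (u v : V) : Trigraph V where
  black := T.black \ single u v
  gray := T.gray ⊔ single u v
  disjoint := by
    intro a b h
    have := T.disjoint a b
    simp only [SimpleGraph.sdiff_adj, SimpleGraph.sup_adj] at h
    tauto

/-- `G` contains an induced copy of `H`. -/
def HasInducedCopy (H : SimpleGraph W) (G : SimpleGraph V) : Prop :=
  Nonempty (H ↪g G)

/-- A trigraph `T` is `H`-induced-saturated if no realization of `T` contains an
induced copy of `H`, but whenever any black or white edge of `T` is recolored gray,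
some realization of the resulting trigraph contains an induced copy of `H`. -/
def IsIndSat (H : SimpleGraph W) (T : Trigraph V) : Prop :=
  (∀ R : SimpleGraph V, T.IsRealization R → ¬ HasInducedCopy H R) ∧
  (∀ u v : V, u ≠ v → ¬ T.gray.Adj u v →
    ∃ R : SimpleGraph V, (T.flip u v).IsRealization R ∧ HasInducedCopy H R)

/-- The induced saturation number: the least number of gray edges in an
`H`-induced-saturated trigraph on `n` vertices (`⊤` if none exists). -/
noncomputable def indsat (n : ℕ) (H : SimpleGraph W) : ℕ∞ :=
  sInf {k : ℕ∞ | ∃ T : Trigraph (Fin n), IsIndSat H T ∧ (T.gray.edgeSet.ncard : ℕ∞) = k}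

/-- `G` contains a (not necessarily induced) copy of `H` as a subgraph. -/
def HasSubCopy (H : SimpleGraph W) (G : SimpleGraph V) : Prop :=
  ∃ f : W → V, Function.Injective f ∧ ∀ a b : W, H.Adj a b → G.Adj (f a) (f b)

/-- A graph `G` is `H`-saturated if it contains no copy of `H` but adding any new
edge creates a copy of `H`. -/
def IsSat (H : SimpleGraph W) (G : SimpleGraph V) : Prop :=
  ¬ HasSubCopy H G ∧
  ∀ u v : V, u ≠ v → ¬ G.Adj u v → HasSubCopy H (G ⊔ single u v)

/-- The saturation number: the least number of edges of an `H`-saturated graph on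
`n` vertices (`⊤` if none exists). -/
noncomputable def satNum (n : ℕ) (H : SimpleGraph W) : ℕ∞ :=
  sInf {k : ℕ∞ | ∃ G : SimpleGraph (Fin n), IsSat H G ∧ (G.edgeSet.ncard : ℕ∞) = k}

/-- The subtrigraph induced on a set of vertices. -/
def induce (s : Set V) (T : Trigraph V) : Trigraph s where
  black := T.black.induce s
  gray := T.gray.induce s
  disjoint := by
    intro a b h
    exact T.disjoint a b (by simpa using h)

/-- The complement trigraph: black and white edges are exchanged, gray edges are
unchanged. -/
def compl (T : Trigraph V) : Trigraph V where
  black := (T.black ⊔ T.gray)ᶜ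
  gray := T.gray
  disjoint := by
    intro a b h
    rcases h with ⟨hb, hg⟩
    rw [SimpleGraph.compl_adj] at hb
    exact hb.2 ((SimpleGraph.sup_adj _ _ _ _).mpr (Or.inr hg))

end Trigraph

section NoGrayP4Aux

open SimpleGraph

private lemma hasP4aux {V : Type*} (R : SimpleGraph V) (w x y z : V)
    (hwy : w ≠ y) (hwz : w ≠ z) (hxz : x ≠ z)
    (a01 : R.Adj w x) (a12 : R.Adj x y) (a23 : R.Adj y z)
    (n02 : ¬R.Adj w y) (n03 : ¬R.Adj w z) (n13 : ¬R.Adj x z) :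
    Trigraph.HasInducedCopy (pathGraph 4) R := by
  have hwx := a01.ne
  have hxy := a12.ne
  have hyz := a23.ne
  refine ⟨⟨⟨![w, x, y, z], ?_⟩, ?_⟩⟩
  · intro i j
    fin_cases i <;> fin_cases j <;> simp_all (config := {decide := true}) <;>
      (intro h; subst h; simp_all)
  · intro i j
    fin_cases i <;> fin_cases j <;>
      simp only [pathGraph_adj, Matrix.cons_val_zero, Matrix.cons_val_one, Matrix.head_cons,
        Matrix.cons_val_two, Matrix.tail_cons, Matrix.cons_val_three] <;>
      norm_num <;>
      first
        | exact R.irrefl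
        | exact a01 | exact a12 | exact a23 | exact a01.symm | exact a12.symm | exact a23.symm
        | exact n02 | exact n03 | exact n13
        | exact fun h => n02 h.symm | exact fun h => n03 h.symm
        | exact fun h => n13 h.symm

private lemma single_adj' {V : Type*} (u v x y : V) :
    (Trigraph.single u v).Adj x y ↔ (x = u ∧ y = v ∨ x = v ∧ y = u) ∧ x ≠ y := by
  simp only [Trigraph.single, SimpleGraph.fromEdgeSet_adj, Set.mem_singleton_iff, Sym2.eq_iff]

private lemma single_le_gray {V : Type*} {T : Trigraph V} {u v : V} (h : T.gray.Adj u v) :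
    Trigraph.single u v ≤ T.gray := by
  intro x y hxy
  rw [single_adj'] at hxy
  rcases hxy.1 with ⟨rfl, rfl⟩ | ⟨rfl, rfl⟩
  · exact h
  · exact h.symm

private lemma real_sup {V : Type*} (T : Trigraph V) (S : SimpleGraph V) (hS : S ≤ T.gray) :
    T.IsRealization (T.black ⊔ S) :=
  ⟨le_sup_left, sup_le le_sup_left (hS.trans le_sup_right)⟩

end NoGrayP4Aux

set_option maxHeartbeats 1000000 in
/-- A `P_4`-induced-saturated trigraph on at least `2` vertices has
no four (distinct) vertices `a, b, c, d` with `ab`, `bc`, `cd` all gray; i.e. the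
gray edges contain no path on four vertices. -/
theorem no_gray_P4 {V : Type*} [Fintype V] (hV : 2 ≤ Fintype.card V)
    (T : Trigraph V) (hT : Trigraph.IsIndSat (SimpleGraph.pathGraph 4) T) :
    ∀ a b c d : V, a ≠ c → a ≠ d → b ≠ d →
      ¬ (T.gray.Adj a b ∧ T.gray.Adj b c ∧ T.gray.Adj c d) := by
  intro a b c d hac had hbd ⟨gab, gbc, gcd⟩
  have hab := gab.ne
  have hbc := gbc.ne
  have hcd := gcd.ne
  have hba := hab.symm; have hcb := hbc.symm; have hdc := hcd.symm
  have hca := hac.symm; have hda := had.symm; have hdb := hbd.symm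
  have nbab : ¬T.black.Adj a b := fun h => T.disjoint a b ⟨h, gab⟩
  have nbbc : ¬T.black.Adj b c := fun h => T.disjoint b c ⟨h, gbc⟩
  have nbcd : ¬T.black.Adj c d := fun h => T.disjoint c d ⟨h, gcd⟩
  have nbba : ¬T.black.Adj b a := fun h => nbab h.symm
  have nbcb : ¬T.black.Adj c b := fun h => nbbc h.symm
  have nbdc : ¬T.black.Adj d c := fun h => nbcd h.symm
  by_cases hx : T.black.Adj a c <;> by_cases hy : T.black.Adj b d <;>
    by_cases hz : T.black.Adj a d
  -- case x y z : order c a d b, S = ⊥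
  · have hx' := hx.symm; have hy' := hy.symm; have hz' := hz.symm
    exact hT.1 (T.black ⊔ ⊥) (real_sup T ⊥ bot_le)
      (hasP4aux _ c a d b hcd hcb hab
        (by simp; tauto) (by simp; tauto) (by simp; tauto)
        (by simp; tauto) (by simp; tauto) (by simp; tauto))
  -- case x y ¬z : order a c d b, S = cd
  · have hx' := hx.symm; have hy' := hy.symm
    have hz' : ¬T.black.Adj d a := fun h => hz h.symm
    exact hT.1 (T.black ⊔ Trigraph.single c d)
      (real_sup T _ (single_le_gray gcd))
      (hasP4aux _ a c d b had hab hcb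
        (by simp only [SimpleGraph.sup_adj, single_adj']; tauto) (by simp only [SimpleGraph.sup_adj, single_adj']; tauto)
        (by simp only [SimpleGraph.sup_adj, single_adj']; tauto) (by simp only [SimpleGraph.sup_adj, single_adj']; tauto)
        (by simp only [SimpleGraph.sup_adj, single_adj']; tauto) (by simp only [SimpleGraph.sup_adj, single_adj']; tauto))
  -- case x ¬y z : order b c a d, S = bc
  · have hx' := hx.symm; have hz' := hz.symm
    have hy' : ¬T.black.Adj d b := fun h => hy h.symm
    exact hT.1 (T.black ⊔ Trigraph.single b c)
      (real_sup T _ (single_le_gray gbc))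
      (hasP4aux _ b c a d hba hbd hcd
        (by simp only [SimpleGraph.sup_adj, single_adj']; tauto) (by simp only [SimpleGraph.sup_adj, single_adj']; tauto)
        (by simp only [SimpleGraph.sup_adj, single_adj']; tauto) (by simp only [SimpleGraph.sup_adj, single_adj']; tauto)
        (by simp only [SimpleGraph.sup_adj, single_adj']; tauto) (by simp only [SimpleGraph.sup_adj, single_adj']; tauto))
  -- case x ¬y ¬z : order b a c d, S = ab ⊔ cd
  · have hx' := hx.symm
    have hy' : ¬T.black.Adj d b := fun h => hy h.symm
    have hz' : ¬T.black.Adj d a := fun h => hz h.symm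
    exact hT.1 (T.black ⊔ (Trigraph.single a b ⊔ Trigraph.single c d))
      (real_sup T _ (sup_le (single_le_gray gab) (single_le_gray gcd)))
      (hasP4aux _ b a c d hbc hbd had
        (by simp only [SimpleGraph.sup_adj, single_adj']; tauto) (by simp only [SimpleGraph.sup_adj, single_adj']; tauto)
        (by simp only [SimpleGraph.sup_adj, single_adj']; tauto) (by simp only [SimpleGraph.sup_adj, single_adj']; tauto)
        (by simp only [SimpleGraph.sup_adj, single_adj']; tauto) (by simp only [SimpleGraph.sup_adj, single_adj']; tauto))
  -- case ¬x y z : order a d b c, S = bc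
  · have hy' := hy.symm; have hz' := hz.symm
    have hx' : ¬T.black.Adj c a := fun h => hx h.symm
    exact hT.1 (T.black ⊔ Trigraph.single b c)
      (real_sup T _ (single_le_gray gbc))
      (hasP4aux _ a d b c hab hac hdc
        (by simp only [SimpleGraph.sup_adj, single_adj']; tauto) (by simp only [SimpleGraph.sup_adj, single_adj']; tauto)
        (by simp only [SimpleGraph.sup_adj, single_adj']; tauto) (by simp only [SimpleGraph.sup_adj, single_adj']; tauto)
        (by simp only [SimpleGraph.sup_adj, single_adj']; tauto) (by simp only [SimpleGraph.sup_adj, single_adj']; tauto))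
  -- case ¬x y ¬z : order a b d c, S = ab ⊔ cd
  · have hy' := hy.symm
    have hx' : ¬T.black.Adj c a := fun h => hx h.symm
    have hz' : ¬T.black.Adj d a := fun h => hz h.symm
    exact hT.1 (T.black ⊔ (Trigraph.single a b ⊔ Trigraph.single c d))
      (real_sup T _ (sup_le (single_le_gray gab) (single_le_gray gcd)))
      (hasP4aux _ a b d c had hac hbc
        (by simp only [SimpleGraph.sup_adj, single_adj']; tauto) (by simp only [SimpleGraph.sup_adj, single_adj']; tauto)
        (by simp only [SimpleGraph.sup_adj, single_adj']; tauto) (by simp only [SimpleGraph.sup_adj, single_adj']; tauto)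
        (by simp only [SimpleGraph.sup_adj, single_adj']; tauto) (by simp only [SimpleGraph.sup_adj, single_adj']; tauto))
  -- case ¬x ¬y z : order d a b c, S = ab ⊔ bc
  · have hz' := hz.symm
    have hx' : ¬T.black.Adj c a := fun h => hx h.symm
    have hy' : ¬T.black.Adj d b := fun h => hy h.symm
    exact hT.1 (T.black ⊔ (Trigraph.single a b ⊔ Trigraph.single b c))
      (real_sup T _ (sup_le (single_le_gray gab) (single_le_gray gbc)))
      (hasP4aux _ d a b c hdb hdc hac
        (by simp only [SimpleGraph.sup_adj, single_adj']; tauto) (by simp only [SimpleGraph.sup_adj, single_adj']; tauto)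
        (by simp only [SimpleGraph.sup_adj, single_adj']; tauto) (by simp only [SimpleGraph.sup_adj, single_adj']; tauto)
        (by simp only [SimpleGraph.sup_adj, single_adj']; tauto) (by simp only [SimpleGraph.sup_adj, single_adj']; tauto))
  -- case ¬x ¬y ¬z : order a b c d, S = ab ⊔ bc ⊔ cd
  · have hx' : ¬T.black.Adj c a := fun h => hx h.symm
    have hy' : ¬T.black.Adj d b := fun h => hy h.symm
    have hz' : ¬T.black.Adj d a := fun h => hz h.symm
    exact hT.1 (T.black ⊔ (Trigraph.single a b ⊔ Trigraph.single b c ⊔ Trigraph.single c d))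
      (real_sup T _ (sup_le (sup_le (single_le_gray gab) (single_le_gray gbc))
        (single_le_gray gcd)))
      (hasP4aux _ a b c d hac had hbd
        (by simp only [SimpleGraph.sup_adj, single_adj']; tauto) (by simp only [SimpleGraph.sup_adj, single_adj']; tauto)
        (by simp only [SimpleGraph.sup_adj, single_adj']; tauto) (by simp only [SimpleGraph.sup_adj, single_adj']; tauto)
        (by simp only [SimpleGraph.sup_adj, single_adj']; tauto) (by simp only [SimpleGraph.sup_adj, single_adj']; tauto))
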